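/- Let G be a finite group that possesses m cyclic subgroups whose union contains all commutators of G. Then for every commutator x of G, the cyclic subgroup ⟨x⟩ has at most m conjugates in G; equivalently, the normalizer N_G(⟨x⟩) has index at most m in G. -/

import Mathlib

open scoped commutatorElement

open Subgroup in
lemma cyclic_sub_unique {H : Type*} [Group H] [Finite H] [IsCyclic H] (A B : Subgroup H)
    (h : Nat.card A = Nat.card B) : A = B := by
  classical
  have := Fintype.ofFinite H
  set n := Nat.card A with hn
  have hn0 : 0 < n := Nat.card_pos
  have key : ∀ (K : Subgroup H), Nat.card K = n → (K : Set H) = {x : H | x ^ n = 1} := by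
    intro K hK
    have hsub : (K : Set H) ⊆ {x : H | x ^ n = 1} := by
      intro x hx
      have : (⟨x, hx⟩ : K) ^ Nat.card K = 1 := pow_card_eq_one'
      rw [hK] at this
      simpa [Set.mem_setOf_eq] using congrArg Subtype.val this
    have hle : ({x : H | x ^ n = 1}.toFinset).card ≤ n := by
      have := IsCyclic.card_pow_eq_one_le (α := H) hn0
      simpa [Set.toFinset_setOf] using this
    have hcardK : (K : Set H).toFinset.card = n := by
      rw [Set.toFinset_card, ← Nat.card_eq_fintype_card]
      exact_mod_cast hK
    have hfs : (K : Set H).toFinset = {x : H | x ^ n = 1}.toFinset := by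
      apply Finset.eq_of_subset_of_card_le
      · intro x hx
        rw [Set.mem_toFinset] at hx ⊢
        exact hsub hx
      · omega
    have := congrArg (fun s : Finset H => (s : Set H)) hfs
    simpa using this
  have hA := key A rfl
  have hB := key B h.symm
  exact SetLike.coe_injective (hA.trans hB.symm)

lemma sub_of_cyclic_unique {G : Type*} [Group G] [Finite G] (C K1 K2 : Subgroup G)
    (hC : IsCyclic C) (h1 : K1 ≤ C) (h2 : K2 ≤ C) (hcard : Nat.card K1 = Nat.card K2) :
    K1 = K2 := by
  have e1 : (K1.subgroupOf C).map C.subtype = K1 := by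
    rw [Subgroup.subgroupOf_map_subtype, inf_eq_left.mpr h1]
  have e2 : (K2.subgroupOf C).map C.subtype = K2 := by
    rw [Subgroup.subgroupOf_map_subtype, inf_eq_left.mpr h2]
  have hc1 : Nat.card (K1.subgroupOf C) = Nat.card K1 := by
    conv_rhs => rw [← e1]
    exact (Nat.card_congr (Subgroup.equivMapOfInjective _ _ C.subtype_injective).toEquiv)
  have hc2 : Nat.card (K2.subgroupOf C) = Nat.card K2 := by
    conv_rhs => rw [← e2]
    exact (Nat.card_congr (Subgroup.equivMapOfInjective _ _ C.subtype_injective).toEquiv)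
  have : K1.subgroupOf C = K2.subgroupOf C :=
    cyclic_sub_unique _ _ (by rw [hc1, hc2, hcard])
  rw [← e1, ← e2, this]

/-- If `G` is a finite group possessing `m` cyclic subgroups whose union contains all
commutators, then for every commutator `z` the cyclic subgroup `⟨z⟩` has at most `m`
conjugates in `G`; equivalently, its normalizer has index at most `m`. -/
theorem normalizer_of_commutator_small_index
    (m : ℕ) (G : Type) [Group G] [Finite G]
    (hcov : ∃ C : Fin m → Subgroup G, (∀ i, IsCyclic ↥(C i)) ∧
      ∀ x y : G, ⁅x, y⁆ ∈ ⋃ i, ((C i : Subgroup G) : Set G)) :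
    ∀ z : G, (∃ x y : G, z = ⁅x, y⁆) →
      Nat.card {K : Subgroup G | ∃ g : G,
          (Subgroup.closure {z}).map (MulAut.conj g).toMonoidHom = K} ≤ m ∧
      (Subgroup.normalizer ((Subgroup.closure {z} : Subgroup G) : Set G)).index ≤ m := by
  classical
  obtain ⟨C, hcyc, hmem⟩ := hcov
  intro z hz
  obtain ⟨x, y, hzxy⟩ := hz
  set H : Subgroup G := Subgroup.closure {z} with hH
  -- the conjugates of H
  have conj_eq : ∀ g : G, H.map (MulAut.conj g).toMonoidHom
      = Subgroup.closure {g * z * g⁻¹} := by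
    intro g
    rw [hH, MonoidHom.map_closure, Set.image_singleton]
    congr 1
  have conj_card : ∀ g : G, Nat.card (H.map (MulAut.conj g).toMonoidHom) = Nat.card H := by
    intro g
    exact (Nat.card_congr
      (Subgroup.equivMapOfInjective _ _ (MulAut.conj g).injective).toEquiv).symm
  -- each conjugate lies in some C i
  have exists_le : ∀ g : G, ∃ i : Fin m, H.map (MulAut.conj g).toMonoidHom ≤ C i := by
    intro g
    have hcomm : g * z * g⁻¹ = ⁅g * x * g⁻¹, g * y * g⁻¹⁆ := by
      subst hzxy
      simp only [commutatorElement_def]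
      group
    have := hmem (g * x * g⁻¹) (g * y * g⁻¹)
    rw [Set.mem_iUnion] at this
    obtain ⟨i, hi⟩ := this
    refine ⟨i, ?_⟩
    rw [conj_eq g, Subgroup.closure_le]
    rw [Set.singleton_subset_iff]
    rw [hcomm]
    exact hi
  choose idx hidx using exists_le
  -- key injectivity property
  have key : ∀ g1 g2 : G, idx g1 = idx g2 →
      H.map (MulAut.conj g1).toMonoidHom = H.map (MulAut.conj g2).toMonoidHom := by
    intro g1 g2 h
    refine sub_of_cyclic_unique (C (idx g1)) _ _ (hcyc _) (hidx g1) (h ▸ hidx g2) ?_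
    rw [conj_card, conj_card]
  constructor
  · -- card of conjugate set ≤ m
    have hinj : Function.Injective
        (fun K : {K : Subgroup G | ∃ g : G, H.map (MulAut.conj g).toMonoidHom = K} =>
          idx K.2.choose) := by
      intro K1 K2 h
      have e1 := K1.2.choose_spec
      have e2 := K2.2.choose_spec
      have := key _ _ h
      exact Subtype.ext (e1 ▸ e2 ▸ this)
    calc Nat.card {K : Subgroup G | ∃ g : G, H.map (MulAut.conj g).toMonoidHom = K}
        ≤ Nat.card (Fin m) := Nat.card_le_card_of_injective _ hinj
      _ = m := by simp
  · -- index of normalizer ≤ m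
    have norm_of_eq : ∀ g1 g2 : G,
        H.map (MulAut.conj g1).toMonoidHom = H.map (MulAut.conj g2).toMonoidHom →
        (g1 : G ⧸ Subgroup.normalizer (H : Set G)) = (g2 : G ⧸ Subgroup.normalizer (H : Set G)) := by
      intro g1 g2 hEq
      rw [QuotientGroup.eq]
      rw [Subgroup.mem_normalizer_iff]
      intro h
      constructor
      · intro hh
        have : (MulAut.conj g2).toMonoidHom h ∈ H.map (MulAut.conj g1).toMonoidHom := by
          rw [hEq]; exact Subgroup.mem_map_of_mem _ hh
        obtain ⟨k, hk, hk2⟩ := this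
        simp only [MulEquiv.coe_toMonoidHom, MulAut.conj_apply] at hk2
        have : h = (g2⁻¹ * g1) * k * (g2⁻¹ * g1)⁻¹ := by
          have := congrArg (fun w => g2⁻¹ * w * g2) hk2
          simp only [mul_assoc, inv_mul_cancel, mul_one] at this ⊢
          simp only [← mul_assoc] at this ⊢
          simpa [mul_assoc] using this.symm
        rw [this]
        have : (g1⁻¹ * g2) * ((g2⁻¹ * g1) * k * (g2⁻¹ * g1)⁻¹) * (g1⁻¹ * g2)⁻¹ = k := by
          group
        rw [this]
        exact hk
      · intro hh
        have : (MulAut.conj g1).toMonoidHom ((g1⁻¹ * g2) * h * (g1⁻¹ * g2)⁻¹)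
            ∈ H.map (MulAut.conj g2).toMonoidHom := by
          rw [← hEq]; exact Subgroup.mem_map_of_mem _ hh
        obtain ⟨k, hk, hk2⟩ := this
        simp only [MulEquiv.coe_toMonoidHom, MulAut.conj_apply] at hk2
        have hh2 : h = k := by
          have h3 : g1 * (g1⁻¹ * g2 * h * (g1⁻¹ * g2)⁻¹) * g1⁻¹ = g2 * h * g2⁻¹ := by group
          rw [h3] at hk2
          exact (mul_left_cancel (mul_right_cancel hk2)).symm
        rw [hh2]; exact hk
    have hinj : Function.Injective
        (fun q : G ⧸ Subgroup.normalizer (H : Set G) => idx q.out) := by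
      intro q1 q2 h
      have := norm_of_eq _ _ (key _ _ h)
      rwa [QuotientGroup.out_eq', QuotientGroup.out_eq'] at this
    calc (Subgroup.normalizer (H : Set G)).index = Nat.card (G ⧸ Subgroup.normalizer (H : Set G)) := rfl
      _ ≤ Nat.card (Fin m) := Nat.card_le_card_of_injective _ hinj
      _ = m := by simp
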